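/- Let G be a compactly generated t.d.l.c. group, let U be a compact open subgroup of G and let A be a compact symmetric subset of G such that G is generated by U together with A. Then there is a finite symmetric subset B of G such that BU = UB = UBU = UAU. Moreover, for any such subset B, one has G = ⟨B⟩U, and the graph Γ with vertex set the coset space G/U in which gU is adjacent to hU if and only if gU ≠ hU and Uh^{-1}gU ⊆ UBU is a Cayley–Abels graph for G with respect to the natural left action of G. -/

import Mathlib

open scoped Pointwise

section Prelim

variable (G : Type*) [Group G] [TopologicalSpace G]

/-- A topological group is compactly generated if it is generated by a compact subset. -/
def CompactlyGeneratedGrp : Prop := ∃ S : Set G, IsCompact S ∧ Subgroup.closure S = ⊤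

/-- G has no nontrivial compact normal subgroup. -/
def NoCompactNormal : Prop :=
  ∀ N : Subgroup G, N.Normal → IsCompact (N : Set G) → N = ⊥

variable {G}

/-- (K,U) is a TMS pair of G. -/
def IsTMSPair (K U : Subgroup G) : Prop :=
  IsCompact (U : Set G) ∧ IsOpen (U : Set G) ∧
  (∀ N : Subgroup G, N.Normal → IsCompact (N : Set G) → ∀ h : G,
    IsCompact (closure {g : G | (∀ k ∈ K, g * k * g⁻¹ ∈ (U : Set G) * (N : Set G)) ∧
      ¬ ∀ k ∈ K, g * k * g⁻¹ ∈ (fun x => h * x * h⁻¹) '' (U : Set G)})) ∧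
  (¬ IsCompact (closure {g : G | ∀ k ∈ K, g * k * g⁻¹ ∈ (U : Set G)})) ∧
  (∀ N : Subgroup G, N.Normal → IsCompact (N : Set G) → N.relIndex K = 0)

/-- K is a TMS subgroup of G. -/
def IsTMSSubgroup (K : Subgroup G) : Prop := ∃ U : Subgroup G, IsTMSPair K U

/-- g belongs to the quasi-centre of G, i.e. has open centraliser. -/
def InQuasiCentre (g : G) : Prop :=
  IsOpen ((Subgroup.centralizer {g} : Subgroup G) : Set G)

/-- A subgroup is locally normal if its normaliser is open. -/
def IsLocallyNormal (H : Subgroup G) : Prop := IsOpen ((Subgroup.normalizer (H : Set G) : Subgroup G) : Set G)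

variable (G)

/-- G is [A]-semisimple: trivial quasi-centre and no nontrivial abelian locally normal
subgroup. -/
def ASemisimple : Prop :=
  (∀ g : G, InQuasiCentre g → g = 1) ∧
  (∀ H : Subgroup G, IsLocallyNormal H → (∀ a ∈ H, ∀ b ∈ H, a * b = b * a) → H = ⊥)

variable {G}

/-- A compact open subgroup U is of finite quotient type if for each n ≥ 1 it has only
finitely many open normal subgroups of index n. -/
def FiniteQuotientType (U : Subgroup G) : Prop :=
  ∀ n : ℕ, 0 < n →
    {N : Subgroup G | N ≤ U ∧ IsOpen (N : Set G) ∧ (∀ u ∈ U, ∀ x ∈ N, u * x * u⁻¹ ∈ N) ∧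
      N.relIndex U = n}.Finite

variable (G)

/-- G is locally of finite quotient type. -/
def LocallyFiniteQuotientType : Prop :=
  ∀ U : Subgroup G, IsCompact (U : Set G) → IsOpen (U : Set G) → FiniteQuotientType U

variable {G}

/-- K is a local direct factor of G: a closed subgroup such that some open subgroup of G
splits as a topological direct product K × L. -/
def LocalDirectFactor (K : Subgroup G) : Prop :=
  IsClosed (K : Set G) ∧
  ∃ L O : Subgroup G, IsClosed (L : Set G) ∧ IsOpen (O : Set G) ∧ K ≤ O ∧ L ≤ O ∧
    K ⊓ L = ⊥ ∧ (∀ k ∈ K, ∀ l ∈ L, k * l = l * k) ∧ (K : Set G) * (L : Set G) = (O : Set G)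

end Prelim
section Graphs

open Set

variable {V : Type*} {T : SimpleGraph V}

/-- A subset of the vertices of a graph is bounded if it has finite diameter. -/
def BddSet (T : SimpleGraph V) (A : Set V) : Prop :=
  ∃ n : ℕ, ∀ w ∈ A, ∀ w' ∈ A, T.dist w w' ≤ n

/-- The set of points outside A at distance at most d from A. -/
def sepSet (T : SimpleGraph V) (A : Set V) (d : ℕ) : Set V :=
  {p | p ∉ A ∧ ∃ q ∈ A, T.dist p q ≤ d}

/-- A is almost separated if δ_d A is bounded for every d. -/
def AlmostSep (T : SimpleGraph V) (A : Set V) : Prop := ∀ d : ℕ, BddSet T (sepSet T A d)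

/-- An end of a graph: an ultrafilter on the Boolean algebra of almost separated sets
vanishing on the ideal of bounded sets, encoded by the collection of almost separated
sets it contains. -/
structure GraphEnd {V : Type*} (T : SimpleGraph V) where
  sets : Set (Set V)
  almostSep' : ∀ A ∈ sets, AlmostSep T A
  not_bdd' : ∀ A ∈ sets, ¬ BddSet T A
  inter_mem' : ∀ A ∈ sets, ∀ B ∈ sets, A ∩ B ∈ sets
  mono' : ∀ A ∈ sets, ∀ B : Set V, AlmostSep T B → BddSet T (A \ B) → B ∈ sets
  total' : ∀ A : Set V, AlmostSep T A → A ∈ sets ∨ Aᶜ ∈ sets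

/-- The Stone topology on the space of ends of a graph. -/
instance : TopologicalSpace (GraphEnd T) :=
  TopologicalSpace.generateFrom {S | ∃ A : Set V, S = {ξ : GraphEnd T | A ∈ ξ.sets}}

section MapLemmas

variable {e : V ≃ V}

lemma bddSet_image (hd : ∀ u v, T.dist (e u) (e v) = T.dist u v)
    {A : Set V} (h : BddSet T A) : BddSet T (e '' A) := by
  obtain ⟨n, hn⟩ := h
  refine ⟨n, ?_⟩
  rintro w ⟨a, ha, rfl⟩ w' ⟨b, hb, rfl⟩
  rw [hd]; exact hn a ha b hb

lemma dist_symm_eq (hd : ∀ u v, T.dist (e u) (e v) = T.dist u v) :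
    ∀ u v, T.dist (e.symm u) (e.symm v) = T.dist u v := by
  intro u v
  rw [← hd (e.symm u) (e.symm v), Equiv.apply_symm_apply, Equiv.apply_symm_apply]

lemma sepSet_image (hd : ∀ u v, T.dist (e u) (e v) = T.dist u v) (A : Set V) (d : ℕ) :
    sepSet T (e '' A) d = e '' sepSet T A d := by
  ext p
  constructor
  · rintro ⟨hp, q, ⟨a, ha, rfl⟩, hq⟩
    refine ⟨e.symm p, ⟨fun hmem => hp ⟨e.symm p, hmem, e.apply_symm_apply p⟩, a, ha, ?_⟩,
      e.apply_symm_apply p⟩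
    rw [← hd (e.symm p) a, e.apply_symm_apply]
    exact hq
  · rintro ⟨p, ⟨hp, q, hq, hpq⟩, rfl⟩
    refine ⟨fun hmem => ?_, ⟨e q, ⟨q, hq, rfl⟩, by rw [hd]; exact hpq⟩⟩
    obtain ⟨a, ha, hae⟩ := hmem
    exact hp (by rwa [← e.injective hae])

lemma almostSep_image (hd : ∀ u v, T.dist (e u) (e v) = T.dist u v)
    {A : Set V} (h : AlmostSep T A) : AlmostSep T (e '' A) := by
  intro d
  rw [sepSet_image hd]
  exact bddSet_image hd (h d)

/-- The image of an end under a distance-preserving bijection of a graph. -/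
def GraphEnd.mapEquiv (e : V ≃ V) (hd : ∀ u v, T.dist (e u) (e v) = T.dist u v)
    (ξ : GraphEnd T) : GraphEnd T where
  sets := (Set.image e) '' ξ.sets
  almostSep' := by
    rintro A ⟨B, hB, rfl⟩
    exact almostSep_image hd (ξ.almostSep' B hB)
  not_bdd' := by
    rintro A ⟨B, hB, rfl⟩ hbdd
    refine ξ.not_bdd' B hB ?_
    have h2 := bddSet_image (e := e.symm) (dist_symm_eq hd) hbdd
    rwa [Equiv.symm_image_image] at h2
  inter_mem' := by
    rintro A ⟨B1, h1, rfl⟩ A' ⟨B2, h2, rfl⟩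
    exact ⟨B1 ∩ B2, ξ.inter_mem' B1 h1 B2 h2, Set.image_inter e.injective⟩
  mono' := by
    rintro A ⟨B, hB, rfl⟩ C hC hbdd
    refine ⟨e.symm '' C, ?_, by rw [Equiv.image_symm_image]⟩
    refine ξ.mono' B hB _ (almostSep_image (dist_symm_eq hd) hC) ?_
    have heq : B \ e.symm '' C = e.symm '' (e '' B \ C) := by
      rw [Set.image_diff e.symm.injective, Equiv.symm_image_image]
    rw [heq]
    exact bddSet_image (dist_symm_eq hd) hbdd
  total' := by
    intro A hA
    rcases ξ.total' (e.symm '' A) (almostSep_image (dist_symm_eq hd) hA) with h | h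
    · exact Or.inl ⟨e.symm '' A, h, by rw [Equiv.image_symm_image]⟩
    · refine Or.inr ⟨(e.symm '' A)ᶜ, h, ?_⟩
      rw [← Set.image_compl_eq e.symm.bijective, Equiv.image_symm_image]

end MapLemmas

section Actions

variable {G : Type*} [Group G]

/-- An action of a group on a graph by automorphisms, given by a homomorphism to the
permutations of the vertices preserving adjacency. -/
def GraphAction (T : SimpleGraph V) (φ : G →* Equiv.Perm V) : Prop :=
  ∀ (g : G) (u v : V), T.Adj u v → T.Adj (φ g u) (φ g v)

variable {φ : G →* Equiv.Perm V}

lemma GraphAction.adj_iff (hφ : GraphAction T φ) (g : G) {u v : V} :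
    T.Adj (φ g u) (φ g v) ↔ T.Adj u v := by
  refine ⟨fun h => ?_, hφ g u v⟩
  have h2 := hφ g⁻¹ _ _ h
  rwa [map_inv, ← Equiv.Perm.mul_apply, ← Equiv.Perm.mul_apply, inv_mul_cancel,
    Equiv.Perm.one_apply, Equiv.Perm.one_apply] at h2

/-- The graph isomorphism induced by a group element. -/
def GraphAction.iso (hφ : GraphAction T φ) (g : G) : T ≃g T :=
  { toEquiv := φ g, map_rel_iff' := fun {_ _} => hφ.adj_iff g }

lemma iso_dist_le (f : T ≃g T) (u v : V) : T.dist (f u) (f v) ≤ T.dist u v := by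
  by_cases h : T.Reachable u v
  · obtain ⟨p, hp⟩ := h.exists_walk_length_eq_dist
    calc T.dist (f u) (f v) ≤ (p.map f.toHom).length := SimpleGraph.dist_le _
    _ = p.length := by simp
    _ = T.dist u v := hp
  · rw [SimpleGraph.dist_eq_zero_of_not_reachable h,
      SimpleGraph.dist_eq_zero_of_not_reachable (fun hr => h (SimpleGraph.Iso.reachable_iff.mp hr))]

lemma GraphAction.dist_eq (hφ : GraphAction T φ) (g : G) (u v : V) :
    T.dist (φ g u) (φ g v) = T.dist u v := by
  refine le_antisymm (iso_dist_le (hφ.iso g) u v) ?_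
  have h2 := iso_dist_le (hφ.iso g⁻¹) (φ g u) (φ g v)
  have he : ∀ w, (hφ.iso g⁻¹) (φ g w) = w := by
    intro w
    show φ g⁻¹ (φ g w) = w
    rw [map_inv, ← Equiv.Perm.mul_apply, inv_mul_cancel, Equiv.Perm.one_apply]
  rwa [he u, he v] at h2

/-- The action of a group element on the space of ends of a graph. -/
def endAct (φ : G →* Equiv.Perm V) (hφ : GraphAction T φ) (g : G) (ξ : GraphEnd T) :
    GraphEnd T :=
  GraphEnd.mapEquiv (φ g) (hφ.dist_eq g) ξ

/-- The set of elements acting trivially on the space of ends. -/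
def endKernel (φ : G →* Equiv.Perm V) (hφ : GraphAction T φ) : Set G :=
  {g : G | ∀ ξ : GraphEnd T, endAct φ hφ g ξ = ξ}

/-- The rigid stabiliser of a subset of the space of ends: the pointwise fixator of its
complement. -/
def ristEnds (φ : G →* Equiv.Perm V) (hφ : GraphAction T φ) (Y : Set (GraphEnd T)) : Set G :=
  {g : G | ∀ ξ : GraphEnd T, ξ ∉ Y → endAct φ hφ g ξ = ξ}

/-- The action on the space of ends is faithful. -/
def FaithfulOnEnds (φ : G →* Equiv.Perm V) (hφ : GraphAction T φ) : Prop :=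
  ∀ g : G, (∀ ξ : GraphEnd T, endAct φ hφ g ξ = ξ) → g = 1

/-- The action on the space of ends is nondiscretely micro-supported: the rigid stabiliser
of every nonempty open set acts nontrivially, and the kernel of its action is not open
in it. -/
def NondiscMicroSupportedOnEnds [TopologicalSpace G] (φ : G →* Equiv.Perm V)
    (hφ : GraphAction T φ) : Prop :=
  ∀ Y : Set (GraphEnd T), IsOpen Y → Y.Nonempty →
    (∃ g ∈ ristEnds φ hφ Y, ∃ ξ : GraphEnd T, endAct φ hφ g ξ ≠ ξ) ∧
    ¬ ∃ W : Set G, IsOpen W ∧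
        endKernel φ hφ ∩ ristEnds φ hφ Y = W ∩ ristEnds φ hφ Y

/-- The action on the space of ends is extremely proximal: every compact proper subspace
is compressible. -/
def ExtremelyProximalOnEnds (φ : G →* Equiv.Perm V) (hφ : GraphAction T φ) : Prop :=
  ∀ Y : Set (GraphEnd T), IsCompact Y → Y ≠ Set.univ →
    ∀ Z : Set (GraphEnd T), IsOpen Z → Z.Nonempty →
      ∃ g : G, endAct φ hφ g '' Y ⊆ Z

/-- A Cayley--Abels graph for G: connected, locally finite, vertex-transitive with compact
open vertex stabilisers. -/
def IsCayleyAbels [TopologicalSpace G] (T : SimpleGraph V) (φ : G →* Equiv.Perm V) : Prop :=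
  GraphAction T φ ∧ T.Connected ∧ (∀ v : V, (T.neighborSet v).Finite) ∧
  (∀ u v : V, ∃ g : G, φ g u = v) ∧
  (∀ v : V, IsCompact {g : G | φ g v = v} ∧ IsOpen {g : G | φ g v = v})

end Actions

/-- The half-tree associated to an arc (ordered pair of adjacent vertices). -/
def halfTree (T : SimpleGraph V) (p : V × V) : Set V :=
  {v : V | T.dist p.2 v < T.dist p.1 v}

/-- A geometric end: an end containing an infinite strictly descending sequence of
half-trees. -/
def IsGeometricEnd {T : SimpleGraph V} (ξ : GraphEnd T) : Prop :=
  ∃ f : ℕ → V × V, (∀ n, T.Adj (f n).1 (f n).2) ∧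
    (∀ n, halfTree T (f (n + 1)) ⊆ halfTree T (f n) ∧
      halfTree T (f (n + 1)) ≠ halfTree T (f n)) ∧
    (∀ n, halfTree T (f n) ∈ ξ.sets)

/-- A tree is leafless if every vertex has degree at least two. -/
def Leafless (T : SimpleGraph V) : Prop := ∀ v : V, (T.neighborSet v).Nontrivial

/-- The vertex set of a subtree: a nonempty convex set of vertices. -/
def IsSubtreeSet (T : SimpleGraph V) (S : Set V) : Prop :=
  S.Nonempty ∧ ∀ u ∈ S, ∀ v ∈ S, ∀ w : V, T.dist u w + T.dist w v = T.dist u v → w ∈ S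

section TopActions

variable {G : Type*} [Group G] [TopologicalSpace G] {φ : G →* Equiv.Perm V}

/-- The action preserves no proper subtree. -/
def NoInvariantProperSubtree (T : SimpleGraph V) (φ : G →* Equiv.Perm V) : Prop :=
  ∀ S : Set V, IsSubtreeSet T S → (∀ (g : G), ∀ v ∈ S, φ g v ∈ S) → S = Set.univ

/-- Arc stabilisers are compact open. -/
def CompactOpenArcStabs (T : SimpleGraph V) (φ : G →* Equiv.Perm V) : Prop :=
  ∀ p : V × V, T.Adj p.1 p.2 →
    IsCompact {g : G | φ g p.1 = p.1 ∧ φ g p.2 = p.2} ∧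
    IsOpen {g : G | φ g p.1 = p.1 ∧ φ g p.2 = p.2}

/-- G has finitely many orbits of arcs. -/
def FinManyArcOrbits (T : SimpleGraph V) (φ : G →* Equiv.Perm V) : Prop :=
  ∃ s : Set (V × V), s.Finite ∧
    ∀ p : V × V, T.Adj p.1 p.2 → ∃ q ∈ s, ∃ g : G, φ g q.1 = p.1 ∧ φ g q.2 = p.2

/-- The action on a leafless tree is arc-geometric: compact open arc stabilisers and
finitely many orbits of arcs. -/
def ArcGeometric (T : SimpleGraph V) (φ : G →* Equiv.Perm V) : Prop :=
  CompactOpenArcStabs T φ ∧ FinManyArcOrbits T φ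

end TopActions

/-- A scale group: a compactly generated t.d.l.c. group admitting a faithful
vertex-transitive action on a locally finite leafless tree with compact open vertex
stabilisers, fixing exactly one end. -/
def IsScaleGroup (G : Type u) [Group G] [TopologicalSpace G] : Prop :=
  ∃ (V : Type u) (T : SimpleGraph V) (φ : G →* Equiv.Perm V) (hφ : GraphAction T φ),
    T.IsTree ∧ Leafless T ∧ (∀ v : V, (T.neighborSet v).Finite) ∧
    Function.Injective φ ∧ (∀ u v : V, ∃ g : G, φ g u = v) ∧
    (∀ v : V, IsCompact {g : G | φ g v = v} ∧ IsOpen {g : G | φ g v = v}) ∧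
    ∃! ξ : GraphEnd T, IsGeometricEnd ξ ∧ ∀ g : G, endAct φ hφ g ξ = ξ

end Graphs

/-- Lemma 2.3: construction of Cayley--Abels graphs. Given a compact open subgroup U and
a compact symmetric set A with G = ⟨U, A⟩, there is a finite symmetric set B with
BU = UB = UBU = UAU, and for any such B one has G = ⟨B⟩U and the graph on G/U with
gU ~ hU iff gU ≠ hU and Uh⁻¹gU ⊆ UBU is a Cayley--Abels graph for G. -/
theorem cayley_abels_construction {G : Type*} [Group G] [TopologicalSpace G]
    [IsTopologicalGroup G] [LocallyCompactSpace G] [TotallyDisconnectedSpace G] [T2Space G]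
    (U : Subgroup G) (hUc : IsCompact (U : Set G)) (hUo : IsOpen (U : Set G))
    (A : Set G) (hAc : IsCompact A) (hAsymm : A = A⁻¹)
    (hgen : Subgroup.closure ((U : Set G) ∪ A) = ⊤) :
    (∃ B : Set G, B.Finite ∧ B = B⁻¹ ∧
      B * (U : Set G) = (U : Set G) * B ∧
      (U : Set G) * B = (U : Set G) * B * (U : Set G) ∧
      (U : Set G) * B * (U : Set G) = (U : Set G) * A * (U : Set G)) ∧
    (∀ B : Set G, B.Finite → B = B⁻¹ →
      B * (U : Set G) = (U : Set G) * B →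
      (U : Set G) * B = (U : Set G) * B * (U : Set G) →
      (U : Set G) * B * (U : Set G) = (U : Set G) * A * (U : Set G) →
      ((Subgroup.closure B : Set G) * (U : Set G) = Set.univ ∧
        ∃ Γ : SimpleGraph (G ⧸ U),
          (∀ g h : G, Γ.Adj (g : G ⧸ U) (h : G ⧸ U) ↔
            (g : G ⧸ U) ≠ (h : G ⧸ U) ∧
            (U : Set G) * {h⁻¹ * g} * (U : Set G) ⊆ (U : Set G) * B * (U : Set G)) ∧
          IsCayleyAbels Γ (MulAction.toPermHom G (G ⧸ U)))) := by
  have hUU : (U : Set G) * U = U := coe_mul_coe U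
  have hUinv : (U : Set G)⁻¹ = U := inv_coe_set
  have hUAUinv : ((U : Set G) * A * (U : Set G))⁻¹ = (U : Set G) * A * (U : Set G) := by
    rw [mul_inv_rev, mul_inv_rev, hUinv, ← hAsymm, mul_assoc]
  constructor
  · -- Part 1: existence of B
    have hUAUc : IsCompact ((U : Set G) * A * (U : Set G)) := (hUc.mul hAc).mul hUc
    have hcover : (U : Set G) * A * (U : Set G) ⊆ ⋃ g ∈ (U : Set G) * A * (U : Set G), g • (U : Set G) := by
      intro x hx
      exact Set.mem_biUnion hx ⟨1, U.one_mem, mul_one x⟩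
    obtain ⟨t, hts, htfin, htcov⟩ := hUAUc.elim_finite_subcover_image
      (fun g _ => hUo.smul g) hcover
    refine ⟨t ∪ t⁻¹, htfin.union htfin.inv, ?_, ?_⟩
    · ext x
      simp only [Set.mem_union, Set.mem_inv, inv_inv]
      tauto
    · set B := t ∪ t⁻¹ with hB
      have hBsub : B ⊆ (U : Set G) * A * (U : Set G) := by
        intro x hx
        rcases hx with hx | hx
        · exact hts hx
        · rw [← hUAUinv]
          exact Set.mem_inv.mpr (hts (Set.mem_inv.mp hx))
      have hBU : B * (U : Set G) = (U : Set G) * A * (U : Set G) := by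
        apply Set.Subset.antisymm
        · calc B * (U : Set G) ⊆ ((U : Set G) * A * (U : Set G)) * (U : Set G) :=
                Set.mul_subset_mul_right hBsub
            _ = (U : Set G) * A * (U : Set G) := by rw [mul_assoc ((U : Set G) * A), hUU]
        · intro x hx
          obtain ⟨g, hgt, hg⟩ := Set.mem_iUnion₂.mp (htcov hx)
          obtain ⟨u, hu, hux⟩ := hg
          exact ⟨g, Or.inl hgt, u, hu, hux⟩
      have hBsymm : B⁻¹ = B := by
        ext x
        simp only [hB, Set.mem_union, Set.mem_inv, inv_inv]
        tauto
      have hUB : (U : Set G) * B = (U : Set G) * A * (U : Set G) := by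
        have : (U : Set G) * B = (B * (U : Set G))⁻¹ := by
          rw [mul_inv_rev, hUinv, hBsymm]
        rw [this, hBU, hUAUinv]
      refine ⟨hBU.trans hUB.symm, ?_, ?_⟩
      · rw [hUB, mul_assoc ((U:Set G)*A), hUU]
      · rw [hUB, mul_assoc ((U:Set G)*A), hUU]
  · -- Part 2
    intro B hBfin hBsymm h1 h2 h3
    set K : Set G := (U : Set G) * B * (U : Set G) with hK
    have hK1 : K = (U : Set G) * B := h2.symm
    have hK2 : K = B * (U : Set G) := h2.symm.trans h1.symm
    have hKinv : K⁻¹ = K := by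
      rw [hK2, mul_inv_rev, hUinv, ← hBsymm]
      exact h1.symm
    have hUmul : ∀ u ∈ (U : Set G), ∀ k ∈ K, u * k ∈ K := by
      intro u hu k hk
      have : u * k ∈ (U : Set G) * K := Set.mul_mem_mul hu hk
      rwa [hK1, ← mul_assoc, hUU, ← hK1] at this
    have hmulU : ∀ k ∈ K, ∀ u ∈ (U : Set G), k * u ∈ K := by
      intro k hk u hu
      have : k * u ∈ K * (U : Set G) := Set.mul_mem_mul hk hu
      rwa [hK2, mul_assoc, hUU, ← hK2] at this
    have hBsubK : B ⊆ K := by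
      intro b hb
      rw [hK2]
      exact ⟨b, hb, 1, U.one_mem, mul_one b⟩
    have hBinv : ∀ b ∈ B, b⁻¹ ∈ B := by
      intro b hb
      rw [hBsymm]
      exact Set.inv_mem_inv.mpr hb
    have hKmem_inv : ∀ x ∈ K, x⁻¹ ∈ K := by
      intro x hx
      rw [← hKinv]
      exact Set.inv_mem_inv.mpr hx
    -- the set ⟨B⟩U
    set S : Set G := (Subgroup.closure B : Set G) * U with hS
    have key : ∀ x ∈ Subgroup.closure B, ∀ u ∈ (U : Set G),
        u * x ∈ S ∧ u * x⁻¹ ∈ S := by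
      intro x hx
      induction hx using Subgroup.closure_induction with
      | mem b hb =>
        intro u hu
        constructor
        · have : u * b ∈ (U : Set G) * B := Set.mul_mem_mul hu hb
          rw [← h1] at this
          obtain ⟨b', hb', v, hv, hbv⟩ := this
          exact ⟨b', Subgroup.subset_closure hb', v, hv, hbv⟩
        · have : u * b⁻¹ ∈ (U : Set G) * B := Set.mul_mem_mul hu (hBinv b hb)
          rw [← h1] at this
          obtain ⟨b', hb', v, hv, hbv⟩ := this
          exact ⟨b', Subgroup.subset_closure hb', v, hv, hbv⟩
      | one =>
        intro u hu
        refine ⟨⟨1, Subgroup.one_mem _, u, hu, by simp⟩, ⟨1, Subgroup.one_mem _, u, hu, by simp⟩⟩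
      | mul x y hx' hy' ihx ihy =>
        intro u hu
        constructor
        · obtain ⟨x', hx'', v, hv, hxv⟩ := (ihx u hu).1
          obtain ⟨y', hy'', w, hw, hyw⟩ := (ihy v hv).1
          have hxv : x' * v = u * x := hxv
          have hyw : y' * w = v * y := hyw
          refine ⟨x' * y', mul_mem hx'' hy'', w, hw, ?_⟩
          calc x' * y' * w = x' * (y' * w) := by group
            _ = x' * (v * y) := by rw [hyw]
            _ = (x' * v) * y := by group
            _ = u * x * y := by rw [hxv]
            _ = u * (x * y) := by group
        · obtain ⟨y', hy'', v, hv, hyv⟩ := (ihy u hu).2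
          obtain ⟨x', hx'', w, hw, hxw⟩ := (ihx v hv).2
          have hyv : y' * v = u * y⁻¹ := hyv
          have hxw : x' * w = v * x⁻¹ := hxw
          refine ⟨y' * x', mul_mem hy'' hx'', w, hw, ?_⟩
          calc y' * x' * w = y' * (x' * w) := by group
            _ = y' * (v * x⁻¹) := by rw [hxw]
            _ = (y' * v) * x⁻¹ := by group
            _ = u * y⁻¹ * x⁻¹ := by rw [hyv]
            _ = u * (x * y)⁻¹ := by group
      | inv x hx' ih =>
        intro u hu
        exact ⟨(ih u hu).2, by rw [inv_inv]; exact (ih u hu).1⟩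
    have hSsubgroup : ∀ a ∈ S, ∀ b ∈ S, a * b ∈ S := by
      rintro a ⟨x, hx, u, hu, rfl⟩ b ⟨y, hy, v, hv, rfl⟩
      obtain ⟨y', hy', w, hw, hyw⟩ := (key y hy u hu).1
      have hyw : y' * w = u * y := hyw
      refine ⟨x * y', mul_mem hx hy', w * v, mul_mem hw hv, ?_⟩
      calc x * y' * (w * v) = x * (y' * w) * v := by group
        _ = x * (u * y) * v := by rw [hyw]
        _ = x * u * (y * v) := by group
    have hSinv : ∀ a ∈ S, a⁻¹ ∈ S := by
      rintro a ⟨x, hx, u, hu, rfl⟩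
      have : u⁻¹ * x⁻¹ ∈ S := (key x hx u⁻¹ (U.inv_mem hu)).2
      rwa [← mul_inv_rev] at this
    let H : Subgroup G :=
      { carrier := S
        one_mem' := ⟨1, Subgroup.one_mem _, 1, U.one_mem, mul_one 1⟩
        mul_mem' := fun {a b} ha hb => hSsubgroup a ha b hb
        inv_mem' := fun ha => hSinv _ ha }
    have hStop : S = Set.univ := by
      have hle : Subgroup.closure ((U : Set G) ∪ A) ≤ H := by
        rw [Subgroup.closure_le]
        rintro x (hx | hx)
        · exact ⟨1, Subgroup.one_mem _, x, hx, one_mul x⟩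
        · have hxK : x ∈ K := by
            rw [h3]
            have : (1 * x) * 1 ∈ (U : Set G) * A * (U : Set G) :=
              Set.mul_mem_mul (Set.mul_mem_mul U.one_mem hx) U.one_mem
            simpa using this
          rw [hK2] at hxK
          obtain ⟨b, hb, u, hu, hbu⟩ := hxK
          exact ⟨b, Subgroup.subset_closure hb, u, hu, hbu⟩
      rw [hgen] at hle
      exact Set.eq_univ_of_forall fun g => hle (Subgroup.mem_top g)
    refine ⟨hStop, ?_⟩
    -- Well-definedness of the adjacency relation
    have hwd : ∀ g g' h h' : G, (g : G ⧸ U) = (g' : G ⧸ U) → (h : G ⧸ U) = (h' : G ⧸ U) →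
        h⁻¹ * g ∈ K → h'⁻¹ * g' ∈ K := by
      intro g g' h h' hg hh hmem
      have hu : g⁻¹ * g' ∈ U := QuotientGroup.eq.mp hg
      have hv : h⁻¹ * h' ∈ U := QuotientGroup.eq.mp hh
      have heq : h'⁻¹ * g' = (h⁻¹ * h')⁻¹ * (h⁻¹ * g) * (g⁻¹ * g') := by group
      rw [heq]
      exact hmulU _ (hUmul _ (U.inv_mem hv) _ hmem) _ hu
    let Γ : SimpleGraph (G ⧸ U) :=
      { Adj := fun x y => x ≠ y ∧ ∃ g h : G, (g : G ⧸ U) = x ∧ (h : G ⧸ U) = y ∧ h⁻¹ * g ∈ K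
        symm := by
          constructor
          rintro x y ⟨hne, g, h, hg, hh, hmem⟩
          refine ⟨hne.symm, h, g, hh, hg, ?_⟩
          have := hKmem_inv _ hmem
          rwa [mul_inv_rev, inv_inv] at this
        loopless := ⟨fun x h => h.1 rfl⟩ }
    have hadj_iff : ∀ g h : G, Γ.Adj (g : G ⧸ U) (h : G ⧸ U) ↔
        (g : G ⧸ U) ≠ (h : G ⧸ U) ∧ h⁻¹ * g ∈ K := by
      intro g h
      constructor
      · rintro ⟨hne, g', h', hg', hh', hmem⟩
        exact ⟨hne, hwd g' g h' h hg' hh' hmem⟩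
      · rintro ⟨hne, hmem⟩
        exact ⟨hne, g, h, rfl, rfl, hmem⟩
    have hKsub_iff : ∀ c : G, (U : Set G) * {c} * (U : Set G) ⊆ K ↔ c ∈ K := by
      intro c
      constructor
      · intro hsub
        have : (1 * c) * 1 ∈ (U : Set G) * {c} * (U : Set G) :=
          Set.mul_mem_mul (Set.mul_mem_mul U.one_mem rfl) U.one_mem
        simpa using hsub this
      · rintro hc x ⟨y, ⟨u, hu, c', hc', huc⟩, w, hw, rfl⟩
        have huc : u * c' = y := huc
        rw [Set.mem_singleton_iff] at hc'
        rw [← huc, hc']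
        exact hmulU _ (hUmul u hu _ hc) w hw
    -- the graph action
    have hsmul_mk : ∀ (k g : G), (MulAction.toPermHom G (G ⧸ U)) k (g : G ⧸ U) = ((k * g : G) : G ⧸ U) :=
      fun k g => rfl
    have hact : GraphAction Γ (MulAction.toPermHom G (G ⧸ U)) := by
      rintro k x y ⟨hne, g, h, hg, hh, hmem⟩
      refine ⟨?_, k * g, k * h, ?_, ?_, ?_⟩
      · intro hcon
        have hcon' : k • x = k • y := hcon
        exact hne (smul_left_cancel k hcon')
      · rw [← hg]; rfl
      · rw [← hh]; rfl
      · have : (k * h)⁻¹ * (k * g) = h⁻¹ * g := by group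
        rw [this]; exact hmem
    have reach_smul : ∀ (k : G) (x y : G ⧸ U), Γ.Reachable x y →
        Γ.Reachable ((MulAction.toPermHom G (G ⧸ U)) k x) ((MulAction.toPermHom G (G ⧸ U)) k y) :=
      fun k x y hr => (SimpleGraph.Iso.reachable_iff (φ := hact.iso k)).mpr hr
    have reach_one : ∀ g : G, Γ.Reachable (g : G ⧸ U) ((1 : G) : G ⧸ U) := by
      have hcl : ∀ x ∈ Subgroup.closure B, Γ.Reachable (x : G ⧸ U) ((1 : G) : G ⧸ U) := by
        intro x hx
        induction hx using Subgroup.closure_induction with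
        | mem b hb =>
          by_cases hbe : (b : G ⧸ U) = ((1 : G) : G ⧸ U)
          · rw [hbe]
          · refine SimpleGraph.Adj.reachable ((hadj_iff b 1).mpr ⟨hbe, ?_⟩)
            simpa using hBsubK hb
        | one => exact SimpleGraph.Reachable.refl _
        | mul x y hx' hy' ihx ihy =>
          have h2 : Γ.Reachable (((x * y : G)) : G ⧸ U) (((x * 1 : G)) : G ⧸ U) :=
            reach_smul x _ _ ihy
          rw [mul_one] at h2
          exact h2.trans ihx
        | inv x hx' ih =>
          have h2 : Γ.Reachable (((x⁻¹ * x : G)) : G ⧸ U) (((x⁻¹ * 1 : G)) : G ⧸ U) :=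
            reach_smul x⁻¹ _ _ ih
          rw [inv_mul_cancel, mul_one] at h2
          exact h2.symm
      intro g
      have hg : g ∈ S := hStop ▸ Set.mem_univ g
      obtain ⟨x, hx, u, hu, rfl⟩ := hg
      have : ((x * u : G) : G ⧸ U) = (x : G ⧸ U) := by
        rw [QuotientGroup.eq]
        simpa [mul_assoc] using U.inv_mem hu
      rw [this]
      exact hcl x hx
    refine ⟨Γ, ?_, hact, ?_, ?_, ?_, ?_⟩
    · -- adjacency spec
      intro g h
      rw [hadj_iff g h, hKsub_iff]
    · -- connected
      have hne : Nonempty (G ⧸ U) := ⟨((1 : G) : G ⧸ U)⟩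
      refine ⟨fun x y => ?_⟩
      obtain ⟨g, rfl⟩ := QuotientGroup.mk_surjective x
      obtain ⟨h, rfl⟩ := QuotientGroup.mk_surjective y
      exact (reach_one g).trans (reach_one h).symm
    · -- locally finite
      intro v
      obtain ⟨g, rfl⟩ := QuotientGroup.mk_surjective v
      refine Set.Finite.subset (hBfin.image fun b => ((g * b : G) : G ⧸ U)) ?_
      intro w hw
      obtain ⟨h, rfl⟩ := QuotientGroup.mk_surjective w
      have hadj : Γ.Adj ((g : G) : G ⧸ U) ((h : G) : G ⧸ U) := hw
      have hmem : h⁻¹ * g ∈ K := ((hadj_iff g h).mp hadj).2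
      have hmem' : g⁻¹ * h ∈ K := by
        have := hKmem_inv _ hmem
        rwa [mul_inv_rev, inv_inv] at this
      rw [hK2] at hmem'
      obtain ⟨b, hb, u, hu, hbu⟩ := hmem'
      refine ⟨b, hb, ?_⟩
      rw [QuotientGroup.eq]
      have : (g * b)⁻¹ * h = b⁻¹ * (g⁻¹ * h) := by group
      rw [this, ← hbu, ← mul_assoc, inv_mul_cancel, one_mul]
      exact hu
    · -- vertex transitive
      intro x y
      obtain ⟨g, rfl⟩ := QuotientGroup.mk_surjective x
      obtain ⟨h, rfl⟩ := QuotientGroup.mk_surjective y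
      refine ⟨h * g⁻¹, ?_⟩
      rw [hsmul_mk, QuotientGroup.eq]
      group
      exact U.one_mem
    · -- stabilisers compact open
      intro v
      obtain ⟨g, rfl⟩ := QuotientGroup.mk_surjective v
      have hset : {k : G | (MulAction.toPermHom G (G ⧸ U)) k ((g : G) : G ⧸ U) = ((g : G) : G ⧸ U)}
          = (fun k : G => g⁻¹ * k⁻¹ * g) ⁻¹' (U : Set G) := by
        ext k
        rw [Set.mem_setOf_eq, hsmul_mk, QuotientGroup.eq]
        have : (k * g)⁻¹ * g = g⁻¹ * k⁻¹ * g := by group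
        rw [this]
        rfl
      have hcont : Continuous fun k : G => g⁻¹ * k⁻¹ * g :=
        (continuous_const.mul continuous_inv).mul continuous_const
      constructor
      · have himg : (fun k : G => g⁻¹ * k⁻¹ * g) ⁻¹' (U : Set G)
            = (fun u : G => g * u⁻¹ * g⁻¹) '' (U : Set G) := by
          ext k
          constructor
          · intro hk
            exact ⟨g⁻¹ * k⁻¹ * g, hk, by group⟩
          · rintro ⟨u, hu, rfl⟩
            show g⁻¹ * (g * u⁻¹ * g⁻¹)⁻¹ * g ∈ (U : Set G)
            have : g⁻¹ * (g * u⁻¹ * g⁻¹)⁻¹ * g = u := by group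
            rw [this]; exact hu
        rw [hset, himg]
        exact hUc.image ((continuous_const.mul continuous_inv).mul continuous_const)
      · rw [hset]
        exact hUo.preimage hcont
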